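/- The set D := {(v₁,v₂,v₃,w₁,w₂,w₃) ∈ ℝ⁶ : v₁+v₂+v₃ = 1, w₁+w₂+w₃ = 1, v₁w₁ − v₂w₂ + v₃w₃ = 0, and v₁,v₂,v₃,w₁,w₂,w₃ ≥ 0} is homeomorphic to a closed 3-dimensional ball (i.e., to the closed unit ball in ℝ³). -/

import Mathlib

open Set Metric

/-- The realization in `ℝ⁶` of the totally nonnegative part of the complete flag variety
of `SL₃(ℝ)`: points `(v₁, v₂, v₃, w₁, w₂, w₃)` with `v₁ + v₂ + v₃ = 1`,
`w₁ + w₂ + w₃ = 1`, `v₁w₁ - v₂w₂ + v₃w₃ = 0`, and all coordinates nonnegative. -/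
def tnnFlag : Set (EuclideanSpace ℝ (Fin 6)) :=
  {x | x 0 + x 1 + x 2 = 1 ∧ x 3 + x 4 + x 5 = 1 ∧
    x 0 * x 3 - x 1 * x 4 + x 2 * x 5 = 0 ∧ ∀ i, 0 ≤ x i}

noncomputable section

namespace TnnBall

/-- lower fiber endpoint -/
def ff (q : ℝ) : ℝ := max 0 (-q)

/-- upper fiber endpoint (denominators clamped so that both branches are
globally continuous; on `|d| ≤ 1` they agree with the true formulas) -/
def gg (q d : ℝ) : ℝ :=
  if 0 ≤ d then (1 - d - q) / (2 - min d 1) else (1 + d) * (1 - q) / (2 + max d (-1))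

/-- hexagonal norm -/
def mu (q d : ℝ) : ℝ := max (max |q| |d|) |q + d|

lemma mu_nonneg' (q d : ℝ) : 0 ≤ mu q d :=
  le_trans (abs_nonneg q) (le_trans (le_max_left _ _) (le_max_left _ _))

lemma gg_pos {q d : ℝ} (h : 0 ≤ d) (h1 : d ≤ 1) : gg q d = (1 - d - q) / (2 - d) := by
  rw [gg, if_pos h, min_eq_left h1]

lemma gg_neg {q d : ℝ} (h : d < 0) (h1 : -1 ≤ d) : gg q d = (1 + d) * (1 - q) / (2 + d) := by
  rw [gg, if_neg (not_le.mpr h), max_eq_left h1]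

lemma continuous_ff : Continuous ff := continuous_const.max continuous_neg

lemma continuous_gg : Continuous fun p : ℝ × ℝ => gg p.1 p.2 := by
  have h1 : Continuous fun p : ℝ × ℝ => (1 - p.2 - p.1) / (2 - min p.2 1) := by
    apply Continuous.div
    · fun_prop
    · fun_prop
    · intro x
      have : min x.2 1 ≤ 1 := min_le_right _ _
      nlinarith
  have h2 : Continuous fun p : ℝ × ℝ => (1 + p.2) * (1 - p.1) / (2 + max p.2 (-1)) := by
    apply Continuous.div
    · fun_prop
    · fun_prop
    · intro x
      have : (-1 : ℝ) ≤ max x.2 (-1) := le_max_right _ _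
      nlinarith
  have : (fun p : ℝ × ℝ => gg p.1 p.2)
      = fun p : ℝ × ℝ => if (0:ℝ) ≤ p.2 then (1 - p.2 - p.1) / (2 - min p.2 1)
        else (1 + p.2) * (1 - p.1) / (2 + max p.2 (-1)) := rfl
  rw [this]
  apply Continuous.if_le h1 h2 continuous_const (by fun_prop)
  intro x hx
  rw [← hx]
  norm_num

lemma continuous_mu : Continuous fun p : ℝ × ℝ => mu p.1 p.2 := by
  unfold mu; fun_prop

end TnnBall

namespace TnnBall

section Keys
variable {q d : ℝ} (hq : |q| ≤ 1) (hd : |d| ≤ 1) (hqd : |q + d| ≤ 1)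

lemma ff_nonneg (q : ℝ) : 0 ≤ ff q := le_max_left _ _

lemma ff_of_nonneg {q : ℝ} (h : 0 ≤ q) : ff q = 0 := max_eq_left (by linarith)

lemma ff_of_nonpos {q : ℝ} (h : q ≤ 0) : ff q = -q := max_eq_right (by linarith)

include hq hd hqd in
lemma ff_le_gg : ff q ≤ gg q d := by
  obtain ⟨hq1, hq2⟩ := abs_le.mp hq
  obtain ⟨hd1, hd2⟩ := abs_le.mp hd
  obtain ⟨hqd1, hqd2⟩ := abs_le.mp hqd
  rcases le_or_gt 0 d with h | h
  · rw [gg_pos h hd2, ff]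
    rw [max_le_iff]
    constructor
    · apply div_nonneg (by linarith) (by linarith)
    · rw [le_div_iff₀ (by linarith)]
      nlinarith
  · rw [gg_neg h hd1, ff, max_le_iff]
    constructor
    · apply div_nonneg (by nlinarith) (by linarith)
    · rw [le_div_iff₀ (by linarith)]
      nlinarith

include hq hd hqd in
lemma ff_lt_gg (hmu : mu q d < 1) : ff q < gg q d := by
  obtain ⟨hq1, hq2⟩ := abs_le.mp hq
  obtain ⟨hd1, hd2⟩ := abs_le.mp hd
  have h1 : |q| < 1 := lt_of_le_of_lt (le_trans (le_max_left _ _) (le_max_left _ _)) hmu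
  have h2 : |d| < 1 := lt_of_le_of_lt (le_trans (le_max_right _ _) (le_max_left _ _)) hmu
  have h3 : |q + d| < 1 := lt_of_le_of_lt (le_max_right _ _) hmu
  obtain ⟨ha1, ha2⟩ := abs_lt.mp h1
  obtain ⟨hb1, hb2⟩ := abs_lt.mp h2
  obtain ⟨hc1, hc2⟩ := abs_lt.mp h3
  rcases le_or_gt 0 d with h | h
  · rw [gg_pos h hd2]
    rcases le_or_gt 0 q with hq0 | hq0
    · rw [ff_of_nonneg hq0]
      exact div_pos (by linarith) (by linarith)
    · rw [ff_of_nonpos hq0.le, lt_div_iff₀ (by linarith)]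
      nlinarith
  · rw [gg_neg h hd1]
    rcases le_or_gt 0 q with hq0 | hq0
    · rw [ff_of_nonneg hq0]
      exact div_pos (by nlinarith) (by linarith)
    · rw [ff_of_nonpos hq0.le, lt_div_iff₀ (by linarith)]
      nlinarith

include hq hd hqd in
lemma ff_eq_gg (hmu : mu q d = 1) : ff q = gg q d := by
  obtain ⟨hq1, hq2⟩ := abs_le.mp hq
  obtain ⟨hd1, hd2⟩ := abs_le.mp hd
  obtain ⟨hqd1, hqd2⟩ := abs_le.mp hqd
  have hcases : q = 1 ∨ q = -1 ∨ d = 1 ∨ d = -1 ∨ q + d = 1 ∨ q + d = -1 := by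
    have hmu : max (max |q| |d|) |q + d| = 1 := hmu
    rcases max_cases (max |q| |d|) |q + d| with ⟨he, _⟩ | ⟨he, _⟩
    · rw [he] at hmu
      rcases max_cases |q| |d| with ⟨he2, _⟩ | ⟨he2, _⟩
      · rw [he2] at hmu
        rcases abs_eq (by norm_num : (0:ℝ) ≤ 1) |>.mp hmu with h | h
        · exact Or.inl h
        · exact Or.inr (Or.inl h)
      · rw [he2] at hmu
        rcases abs_eq (by norm_num : (0:ℝ) ≤ 1) |>.mp hmu with h | h
        · exact Or.inr (Or.inr (Or.inl h))
        · exact Or.inr (Or.inr (Or.inr (Or.inl h)))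
    · rw [he] at hmu
      rcases abs_eq (by norm_num : (0:ℝ) ≤ 1) |>.mp hmu with h | h
      · exact Or.inr (Or.inr (Or.inr (Or.inr (Or.inl h))))
      · exact Or.inr (Or.inr (Or.inr (Or.inr (Or.inr h))))
  rcases hcases with h | h | h | h | h | h
  · subst h
    rw [ff_of_nonneg (by norm_num)]
    rcases le_or_gt 0 d with h | h
    · have hd0 : d = 0 := by linarith
      subst hd0
      rw [gg_pos le_rfl (by norm_num)]
      norm_num
    · rw [gg_neg h hd1]
      norm_num
  · subst h
    rw [ff_of_nonpos (by norm_num)]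
    have hd0 : 0 ≤ d := by linarith
    rw [gg_pos hd0 hd2]
    rw [eq_div_iff (by linarith)]
    ring
  · subst h
    rw [gg_pos (by norm_num) le_rfl]
    have hq0 : q ≤ 0 := by linarith
    rw [ff_of_nonpos hq0]
    norm_num
  · subst h
    rw [gg_neg (by norm_num) le_rfl]
    have hq0 : 0 ≤ q := by linarith
    rw [ff_of_nonneg hq0]
    norm_num
  · have hd0 : 0 ≤ d := by nlinarith
    rw [gg_pos hd0 hd2, ff_of_nonneg (by linarith)]
    have : 1 - d - q = 0 := by linarith
    rw [this]
    simp
  · rcases lt_or_ge d 0 with h0 | h0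
    · rw [gg_neg h0 hd1, ff_of_nonpos (by linarith)]
      rw [eq_div_iff (by linarith)]
      nlinarith
    · have hd0 : d = 0 := by nlinarith
      subst hd0
      rw [gg_pos le_rfl (by norm_num), ff_of_nonpos (by linarith)]
      rw [eq_div_iff (by norm_num)]
      linarith

include hq hd hqd in
lemma gg_le : gg q d ≤ (1 - q) / 2 := by
  obtain ⟨hq1, hq2⟩ := abs_le.mp hq
  obtain ⟨hd1, hd2⟩ := abs_le.mp hd
  rcases le_or_gt 0 d with h | h
  · rw [gg_pos h hd2, div_le_div_iff₀ (by linarith) (by norm_num)]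
    nlinarith
  · rw [gg_neg h hd1, div_le_div_iff₀ (by linarith) (by norm_num)]
    nlinarith

end Keys

end TnnBall

namespace TnnBall

/-- the flag set, in the plain pi type -/
def T : Set (Fin 6 → ℝ) :=
  {x | x 0 + x 1 + x 2 = 1 ∧ x 3 + x 4 + x 5 = 1 ∧
    x 0 * x 3 - x 1 * x 4 + x 2 * x 5 = 0 ∧ ∀ i, 0 ≤ x i}

/-- the "solid" coordinates form of the flag set -/
def S : Set (Fin 3 → ℝ) :=
  {p | mu (p 0) (p 1) ≤ 1 ∧ ff (p 0) ≤ p 2 ∧ p 2 ≤ gg (p 0) (p 1)}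

def toS (x : Fin 6 → ℝ) : Fin 3 → ℝ := ![x 0 - x 2, x 3 - x 5, x 2]

def Wex (p : Fin 3 → ℝ) : ℝ := (2 * p 2 + p 0 + p 1 * p 0) / (2 - 2 * p 2 - p 0)

def toT (p : Fin 3 → ℝ) : Fin 6 → ℝ :=
  ![p 2 + p 0, 1 - 2 * p 2 - p 0, p 2,
    (1 - Wex p + p 1) / 2, Wex p, (1 - Wex p - p 1) / 2]

lemma S_absq {p : Fin 3 → ℝ} (hp : p ∈ S) : |p 0| ≤ 1 :=
  le_trans (le_trans (le_max_left _ _) (le_max_left _ _)) hp.1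

lemma S_absd {p : Fin 3 → ℝ} (hp : p ∈ S) : |p 1| ≤ 1 :=
  le_trans (le_trans (le_max_right _ _) (le_max_left _ _)) hp.1

lemma S_absqd {p : Fin 3 → ℝ} (hp : p ∈ S) : |p 0 + p 1| ≤ 1 :=
  le_trans (le_max_right _ _) hp.1

lemma S_denpos {p : Fin 3 → ℝ} (hp : p ∈ S) : 0 < 2 - 2 * p 2 - p 0 := by
  have h := hp.2.2.trans (gg_le (S_absq hp) (S_absd hp) (S_absqd hp))
  have := abs_le.mp (S_absq hp)
  linarith [(le_div_iff₀ (by norm_num : (0:ℝ) < 2)).mp h]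

lemma toS_mem {x : Fin 6 → ℝ} (hx : x ∈ T) : toS x ∈ S := by
  obtain ⟨e1, e2, e3, hpos⟩ := hx
  have h0 := hpos 0; have h1 := hpos 1; have h2 := hpos 2
  have h3 := hpos 3; have h4 := hpos 4; have h5 := hpos 5
  have e2x1 : x 1 * (x 3 + x 4 + x 5) = x 1 := by rw [e2]; ring
  have key1 : x 3 * (x 0 + x 1) ≤ x 1 := by
    nlinarith [mul_nonneg h2 h5, mul_nonneg h1 h5]
  have key2 : x 5 * (x 1 + x 2) ≤ x 1 := by
    nlinarith [mul_nonneg h0 h3, mul_nonneg h1 h3]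
  have hq : |x 0 - x 2| ≤ 1 := abs_le.mpr ⟨by linarith, by linarith⟩
  have hd : |x 3 - x 5| ≤ 1 := abs_le.mpr ⟨by linarith, by linarith⟩
  have hqd : |(x 0 - x 2) + (x 3 - x 5)| ≤ 1 := by
    rw [abs_le]
    constructor
    · nlinarith [key2, mul_nonneg h3 (by linarith : (0:ℝ) ≤ x 1 + x 2),
        mul_nonneg h0 (by linarith : (0:ℝ) ≤ 2 + (x 3 - x 5))]
    · nlinarith [key1, mul_nonneg h5 (by linarith : (0:ℝ) ≤ x 0 + x 1),
        mul_nonneg h2 (by linarith : (0:ℝ) ≤ 2 - (x 3 - x 5))]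
  have hT0 : toS x 0 = x 0 - x 2 := rfl
  have hT1 : toS x 1 = x 3 - x 5 := rfl
  have hT2 : toS x 2 = x 2 := rfl
  refine ⟨?_, ?_, ?_⟩
  · rw [hT0, hT1]
    exact max_le (max_le hq hd) hqd
  · rw [hT0, hT2, ff]
    exact max_le h2 (by linarith)
  · rw [hT0, hT1, hT2]
    obtain ⟨hd1, hd2⟩ := abs_le.mp hd
    rcases le_or_gt 0 (x 3 - x 5) with h | h
    · rw [gg_pos h hd2, le_div_iff₀ (by linarith)]
      nlinarith [key1, mul_nonneg h5 (by linarith : (0:ℝ) ≤ x 0 + x 1)]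
    · rw [gg_neg h hd1, le_div_iff₀ (by linarith)]
      nlinarith [key2, mul_nonneg h3 (by linarith : (0:ℝ) ≤ x 1 + x 2)]

lemma toT_mem {p : Fin 3 → ℝ} (hp : p ∈ S) : toT p ∈ T := by
  obtain ⟨hq1, hq2⟩ := abs_le.mp (S_absq hp)
  obtain ⟨hd1, hd2⟩ := abs_le.mp (S_absd hp)
  obtain ⟨hqd1, hqd2⟩ := abs_le.mp (S_absqd hp)
  have hden := S_denpos hp
  have hs0 : 0 ≤ p 2 := le_trans (ff_nonneg _) hp.2.1
  have hsq : -(p 0) ≤ p 2 := le_trans (le_max_right _ _) hp.2.1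
  have hsg := hp.2.2
  -- numerator of W is nonnegative
  have hnum : 0 ≤ 2 * p 2 + p 0 + p 1 * p 0 := by
    rcases le_or_gt 0 (p 0) with h | h
    · nlinarith
    · nlinarith
  -- W ≤ 1 + d  and  W ≤ 1 - d, in cleared form
  have hup : p 2 * (2 + p 1) ≤ (1 + p 1) * (1 - p 0) := by
    rcases le_or_gt 0 (p 1) with h | h
    · rw [gg_pos h hd2, le_div_iff₀ (by linarith)] at hsg
      nlinarith [mul_nonneg h (by linarith : (0:ℝ) ≤ 2 - p 0 - 2 * p 2)]
    · rw [gg_neg h hd1, le_div_iff₀ (by linarith)] at hsg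
      linarith
  have hdown : p 2 * (2 - p 1) ≤ 1 - p 1 - p 0 := by
    rcases le_or_gt 0 (p 1) with h | h
    · rw [gg_pos h hd2, le_div_iff₀ (by linarith)] at hsg
      linarith
    · rw [gg_neg h hd1, le_div_iff₀ (by linarith)] at hsg
      nlinarith [mul_nonneg (by linarith : (0:ℝ) ≤ -(p 1))
        (by linarith : (0:ℝ) ≤ 2 - p 0 - 2 * p 2)]
  have hW1 : Wex p ≤ 1 + p 1 := by
    rw [Wex, div_le_iff₀ hden]; nlinarith
  have hW3 : Wex p ≤ 1 - p 1 := by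
    rw [Wex, div_le_iff₀ hden]; nlinarith
  have hW0 : 0 ≤ Wex p := div_nonneg hnum hden.le
  have hv2 : 2 * p 2 + p 0 ≤ 1 := by
    have h := hsg.trans (gg_le (S_absq hp) (S_absd hp) (S_absqd hp))
    linarith [(le_div_iff₀ (by norm_num : (0:ℝ) < 2)).mp h]
  refine ⟨?_, ?_, ?_, ?_⟩
  · show (p 2 + p 0) + (1 - 2 * p 2 - p 0) + p 2 = 1
    ring
  · show (1 - Wex p + p 1) / 2 + Wex p + (1 - Wex p - p 1) / 2 = 1
    ring
  · show (p 2 + p 0) * ((1 - Wex p + p 1) / 2) - (1 - 2 * p 2 - p 0) * Wex p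
      + p 2 * ((1 - Wex p - p 1) / 2) = 0
    rw [Wex]
    have hW : (2 * p 2 + p 0 + p 1 * p 0) / (2 - 2 * p 2 - p 0) * (2 - 2 * p 2 - p 0)
        = 2 * p 2 + p 0 + p 1 * p 0 := div_mul_cancel₀ _ hden.ne'
    linear_combination (-1/2 : ℝ) * hW
  · intro i
    fin_cases i
    · show 0 ≤ p 2 + p 0
      linarith
    · show 0 ≤ 1 - 2 * p 2 - p 0
      linarith
    · exact hs0
    · show 0 ≤ (1 - Wex p + p 1) / 2
      linarith
    · exact hW0
    · show 0 ≤ (1 - Wex p - p 1) / 2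
      linarith

end TnnBall

namespace TnnBall

lemma toS_toT {p : Fin 3 → ℝ} : toS (toT p) = p := by
  funext i
  fin_cases i
  · show (p 2 + p 0) - p 2 = p 0
    ring
  · show (1 - Wex p + p 1) / 2 - (1 - Wex p - p 1) / 2 = p 1
    ring
  · rfl

lemma toT_toS {x : Fin 6 → ℝ} (hx : x ∈ T) : toT (toS x) = x := by
  obtain ⟨e1, e2, e3, hpos⟩ := hx
  have h1 := hpos 1
  have hden : (2 : ℝ) - 2 * (x 2) - (x 0 - x 2) ≠ 0 := by
    have : (2 : ℝ) - 2 * (x 2) - (x 0 - x 2) = 1 + x 1 := by linarith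
    rw [this]; positivity
  have hW : Wex (toS x) = x 4 := by
    show (2 * x 2 + (x 0 - x 2) + (x 3 - x 5) * (x 0 - x 2)) / (2 - 2 * x 2 - (x 0 - x 2)) = x 4
    rw [div_eq_iff hden]
    linear_combination (1 + x 4 - x 3 - x 5) * e1 + (x 1 - 1) * e2 + 2 * e3
  funext i
  fin_cases i
  · show x 2 + (x 0 - x 2) = x 0
    ring
  · show 1 - 2 * x 2 - (x 0 - x 2) = x 1
    linarith
  · rfl
  · show (1 - Wex (toS x) + (x 3 - x 5)) / 2 = x 3
    rw [hW]; linarith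
  · exact hW
  · show (1 - Wex (toS x) - (x 3 - x 5)) / 2 = x 5
    rw [hW]; linarith

lemma continuous_toS : Continuous toS := by
  apply continuous_pi
  intro i
  fin_cases i
  · show Continuous fun x : Fin 6 → ℝ => x 0 - x 2
    fun_prop
  · show Continuous fun x : Fin 6 → ℝ => x 3 - x 5
    fun_prop
  · show Continuous fun x : Fin 6 → ℝ => x 2
    fun_prop

lemma contc {s : Set (Fin 3 → ℝ)} (i : Fin 3) : Continuous fun p : ↥s => p.1 i :=
  (continuous_apply i).comp continuous_subtype_val

lemma continuous_Wex_S : Continuous fun p : ↥S => Wex p.1 := by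
  apply Continuous.div
  · exact ((continuous_const.mul (contc 2)).add (contc 0)).add ((contc 1).mul (contc 0))
  · exact (continuous_const.sub (continuous_const.mul (contc 2))).sub (contc 0)
  · exact fun p => (S_denpos p.2).ne'

lemma continuous_toT_S : Continuous fun p : ↥S => toT p.1 := by
  apply continuous_pi
  intro i
  have hW := continuous_Wex_S
  fin_cases i
  · show Continuous fun p : ↥S => p.1 2 + p.1 0
    exact (contc 2).add (contc 0)
  · show Continuous fun p : ↥S => 1 - 2 * p.1 2 - p.1 0
    exact (continuous_const.sub (continuous_const.mul (contc 2))).sub (contc 0)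
  · show Continuous fun p : ↥S => p.1 2
    exact contc 2
  · show Continuous fun p : ↥S => (1 - Wex p.1 + p.1 1) / 2
    exact ((continuous_const.sub hW).add (contc 1)).div_const 2
  · exact hW
  · show Continuous fun p : ↥S => (1 - Wex p.1 - p.1 1) / 2
    exact ((continuous_const.sub hW).sub (contc 1)).div_const 2

/-- The homeomorphism between the flag set and its solid-coordinates form. -/
def homeoTS : ↥T ≃ₜ ↥S where
  toFun x := ⟨toS x.1, toS_mem x.2⟩
  invFun p := ⟨toT p.1, toT_mem p.2⟩
  left_inv x := Subtype.ext (toT_toS x.2)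
  right_inv p := Subtype.ext toS_toT
  continuous_toFun := Continuous.subtype_mk (continuous_toS.comp continuous_subtype_val) _
  continuous_invFun := Continuous.subtype_mk continuous_toT_S _

end TnnBall

namespace TnnBall

/-- the convex "double cone over a hexagon" -/
def E : Set (Fin 3 → ℝ) := {p | mu (p 0) (p 1) + |p 2| ≤ 1}

def th3 (p : Fin 3 → ℝ) : ℝ :=
  (2 * p 2 - ff (p 0) - gg (p 0) (p 1)) *
    ((1 - mu (p 0) (p 1)) / (gg (p 0) (p 1) - ff (p 0)))

def ps3 (p : Fin 3 → ℝ) : ℝ :=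
  (p 2 * ((gg (p 0) (p 1) - ff (p 0)) / (1 - mu (p 0) (p 1))) + ff (p 0) + gg (p 0) (p 1)) / 2

def toE (p : Fin 3 → ℝ) : Fin 3 → ℝ := ![p 0, p 1, th3 p]

def fromE (p : Fin 3 → ℝ) : Fin 3 → ℝ := ![p 0, p 1, ps3 p]

lemma E_mu_le {p : Fin 3 → ℝ} (hp : p ∈ E) : mu (p 0) (p 1) ≤ 1 := by
  have := abs_nonneg (p 2); have h := hp; rw [E, mem_setOf_eq] at h; linarith

lemma E_abs2 {p : Fin 3 → ℝ} (hp : p ∈ E) : |p 2| ≤ 1 - mu (p 0) (p 1) := by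
  have h := hp; rw [E, mem_setOf_eq] at h; linarith

lemma E_absq {p : Fin 3 → ℝ} (hp : p ∈ E) : |p 0| ≤ 1 :=
  le_trans (le_trans (le_max_left _ _) (le_max_left _ _)) (E_mu_le hp)

lemma E_absd {p : Fin 3 → ℝ} (hp : p ∈ E) : |p 1| ≤ 1 :=
  le_trans (le_trans (le_max_right _ _) (le_max_left _ _)) (E_mu_le hp)

lemma E_absqd {p : Fin 3 → ℝ} (hp : p ∈ E) : |p 0 + p 1| ≤ 1 :=
  le_trans (le_max_right _ _) (E_mu_le hp)

lemma S_sigma_nonneg {p : Fin 3 → ℝ} (hmu : mu (p 0) (p 1) ≤ 1) :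
    0 ≤ 1 - mu (p 0) (p 1) := by linarith

/-- if the fiber of `S` is degenerate, we are on the boundary hexagon -/
lemma S_mu_eq_one {p : Fin 3 → ℝ} (hmu : mu (p 0) (p 1) ≤ 1)
    (hq : |p 0| ≤ 1) (hd : |p 1| ≤ 1) (hqd : |p 0 + p 1| ≤ 1)
    (h : gg (p 0) (p 1) - ff (p 0) = 0) : mu (p 0) (p 1) = 1 := by
  rcases eq_or_lt_of_le hmu with h1 | h1
  · exact h1
  · exact absurd (sub_eq_zero.mp h).symm (ne_of_lt (ff_lt_gg hq hd hqd h1))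

lemma bound_th3 {p : Fin 3 → ℝ} (hp : p ∈ S) : |th3 p| ≤ 1 - mu (p 0) (p 1) := by
  obtain ⟨hmu, hf, hg⟩ := id hp
  have hσ : 0 ≤ 1 - mu (p 0) (p 1) := by linarith
  have hfg : ff (p 0) ≤ gg (p 0) (p 1) :=
    ff_le_gg (S_absq hp) (S_absd hp) (S_absqd hp)
  rcases eq_or_lt_of_le hfg with h | h
  · rw [th3, ← h, sub_self, div_zero, mul_zero, abs_zero]
    exact hσ
  · have hρ : 0 < gg (p 0) (p 1) - ff (p 0) := by linarith
    rw [th3, abs_mul, abs_of_nonneg (div_nonneg hσ hρ.le)]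
    have hb : |2 * p 2 - ff (p 0) - gg (p 0) (p 1)| ≤ gg (p 0) (p 1) - ff (p 0) :=
      abs_le.mpr ⟨by linarith, by linarith⟩
    calc |2 * p 2 - ff (p 0) - gg (p 0) (p 1)| * ((1 - mu (p 0) (p 1)) / (gg (p 0) (p 1) - ff (p 0)))
        ≤ (gg (p 0) (p 1) - ff (p 0)) * ((1 - mu (p 0) (p 1)) / (gg (p 0) (p 1) - ff (p 0))) := by
          apply mul_le_mul_of_nonneg_right hb (div_nonneg hσ hρ.le)
      _ = 1 - mu (p 0) (p 1) := by field_simp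

lemma bound_ps3 {p : Fin 3 → ℝ} (hp : p ∈ E) :
    |p 2 * ((gg (p 0) (p 1) - ff (p 0)) / (1 - mu (p 0) (p 1)))|
      ≤ gg (p 0) (p 1) - ff (p 0) := by
  have hfg : ff (p 0) ≤ gg (p 0) (p 1) := ff_le_gg (E_absq hp) (E_absd hp) (E_absqd hp)
  have h2 := E_abs2 hp
  rcases eq_or_lt_of_le (S_sigma_nonneg (p := p) (E_mu_le hp)) with h | h
  · have hp2 : p 2 = 0 := abs_eq_zero.mp (le_antisymm (h ▸ h2) (abs_nonneg _))
    rw [hp2, zero_mul, abs_zero]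
    linarith
  · rw [abs_mul, abs_of_nonneg (div_nonneg (by linarith) h.le)]
    calc |p 2| * ((gg (p 0) (p 1) - ff (p 0)) / (1 - mu (p 0) (p 1)))
        ≤ (1 - mu (p 0) (p 1)) * ((gg (p 0) (p 1) - ff (p 0)) / (1 - mu (p 0) (p 1))) :=
          mul_le_mul_of_nonneg_right h2 (div_nonneg (by linarith) (by linarith))
      _ = gg (p 0) (p 1) - ff (p 0) := by field_simp

lemma toE_mem {p : Fin 3 → ℝ} (hp : p ∈ S) : toE p ∈ E := by
  have h := bound_th3 hp
  show mu (p 0) (p 1) + |th3 p| ≤ 1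
  linarith

lemma fromE_mem {p : Fin 3 → ℝ} (hp : p ∈ E) : fromE p ∈ S := by
  have h := abs_le.mp (bound_ps3 hp)
  have hfg : ff (p 0) ≤ gg (p 0) (p 1) := ff_le_gg (E_absq hp) (E_absd hp) (E_absqd hp)
  refine ⟨?_, ?_, ?_⟩
  · show mu (p 0) (p 1) ≤ 1
    exact E_mu_le hp
  · show ff (p 0) ≤ ps3 p
    rw [ps3]; rcases h with ⟨h1, _⟩; linarith
  · show ps3 p ≤ gg (p 0) (p 1)
    rw [ps3]; rcases h with ⟨_, h2⟩; linarith

lemma fromE_toE {p : Fin 3 → ℝ} (hp : p ∈ S) : fromE (toE p) = p := by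
  obtain ⟨hmu, hf, hg⟩ := hp
  have hfg : ff (p 0) ≤ gg (p 0) (p 1) :=
    ff_le_gg (S_absq ⟨hmu, hf, hg⟩) (S_absd ⟨hmu, hf, hg⟩) (S_absqd ⟨hmu, hf, hg⟩)
  funext i
  fin_cases i
  · rfl
  · rfl
  · show ps3 (toE p) = p 2
    have h0 : toE p 0 = p 0 := rfl
    have h1 : toE p 1 = p 1 := rfl
    have h2 : toE p 2 = th3 p := rfl
    rw [ps3, h0, h1, h2]
    rcases eq_or_lt_of_le hfg with h | h
    · rw [th3, ← h, sub_self, div_zero, mul_zero, zero_mul]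
      have : p 2 = ff (p 0) := le_antisymm (h ▸ hg) hf
      rw [this]; ring
    · have hρ : gg (p 0) (p 1) - ff (p 0) ≠ 0 := by linarith
      have hσ : (1 : ℝ) - mu (p 0) (p 1) ≠ 0 := by
        rcases eq_or_lt_of_le hmu with h1 | h1
        · exact absurd (ff_eq_gg (S_absq ⟨hmu, hf, hg⟩) (S_absd ⟨hmu, hf, hg⟩)
            (S_absqd ⟨hmu, hf, hg⟩) h1) (ne_of_lt h)
        · linarith
      rw [th3]
      field_simp
      ring
  
lemma toE_fromE {p : Fin 3 → ℝ} (hp : p ∈ E) : toE (fromE p) = p := by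
  have hfg : ff (p 0) ≤ gg (p 0) (p 1) := ff_le_gg (E_absq hp) (E_absd hp) (E_absqd hp)
  funext i
  fin_cases i
  · rfl
  · rfl
  · show th3 (fromE p) = p 2
    have h0 : fromE p 0 = p 0 := rfl
    have h1 : fromE p 1 = p 1 := rfl
    have h2 : fromE p 2 = ps3 p := rfl
    rw [th3, h0, h1, h2]
    rcases eq_or_lt_of_le (S_sigma_nonneg (p := p) (E_mu_le hp)) with h | h
    · have hp2 : p 2 = 0 :=
        abs_eq_zero.mp (le_antisymm (h ▸ E_abs2 hp) (abs_nonneg _))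
      rw [← h, zero_div, mul_zero, hp2]
    · have hσ : (1 : ℝ) - mu (p 0) (p 1) ≠ 0 := by linarith
      have hρ : gg (p 0) (p 1) - ff (p 0) ≠ 0 := by
        have := ff_lt_gg (E_absq hp) (E_absd hp) (E_absqd hp) (by linarith)
        linarith
      rw [ps3]
      field_simp
      ring

end TnnBall

namespace TnnBall

lemma continuous_ggc {s : Set (Fin 3 → ℝ)} : Continuous fun p : ↥s => gg (p.1 0) (p.1 1) :=
  continuous_gg.comp ((contc 0).prodMk (contc 1))

lemma continuous_muc {s : Set (Fin 3 → ℝ)} : Continuous fun p : ↥s => mu (p.1 0) (p.1 1) :=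
  continuous_mu.comp ((contc 0).prodMk (contc 1))

lemma continuous_ffc {s : Set (Fin 3 → ℝ)} : Continuous fun p : ↥s => ff (p.1 0) :=
  continuous_ff.comp (contc 0)

lemma continuous_th3_S : Continuous fun p : ↥S => th3 p.1 := by
  rw [continuous_iff_continuousAt]
  intro p₀
  by_cases hρ : gg (p₀.1 0) (p₀.1 1) - ff (p₀.1 0) = 0
  · have hval : th3 p₀.1 = 0 := by
      rw [th3, hρ, div_zero, mul_zero]
    have hμ1 : mu (p₀.1 0) (p₀.1 1) = 1 :=
      S_mu_eq_one p₀.2.1 (S_absq p₀.2) (S_absd p₀.2) (S_absqd p₀.2) hρ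
    have htend : Filter.Tendsto (fun p : ↥S => 1 - mu (p.1 0) (p.1 1))
        (nhds p₀) (nhds 0) := by
      have h := ((continuous_const (y := (1:ℝ))).sub continuous_muc).tendsto p₀
      simp only [Pi.sub_def] at h; rw [hμ1, sub_self] at h
      exact h
    have hb : ∀ p : ↥S, ‖th3 p.1‖ ≤ 1 - mu (p.1 0) (p.1 1) := fun p => by
      rw [Real.norm_eq_abs]; exact bound_th3 p.2
    have hsq := squeeze_zero_norm hb htend
    unfold ContinuousAt
    have h0 : (fun p : ↥S => th3 p.1) p₀ = 0 := hval
    rw [h0]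
    exact hsq
  · have : ContinuousAt (fun p : ↥S => (2 * p.1 2 - ff (p.1 0) - gg (p.1 0) (p.1 1)) *
        ((1 - mu (p.1 0) (p.1 1)) / (gg (p.1 0) (p.1 1) - ff (p.1 0)))) p₀ := by
      apply ContinuousAt.mul
      · exact (((continuous_const.mul (contc 2)).sub continuous_ffc).sub
          continuous_ggc).continuousAt
      · exact ContinuousAt.div (continuous_const.sub continuous_muc).continuousAt
          (continuous_ggc.sub continuous_ffc).continuousAt hρ
    exact this

lemma continuous_ps3_E : Continuous fun p : ↥E => ps3 p.1 := by
  have hmain : Continuous fun p : ↥E =>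
      p.1 2 * ((gg (p.1 0) (p.1 1) - ff (p.1 0)) / (1 - mu (p.1 0) (p.1 1))) := by
    rw [continuous_iff_continuousAt]
    intro p₀
    by_cases hσ : (1 : ℝ) - mu (p₀.1 0) (p₀.1 1) = 0
    · have hρ : gg (p₀.1 0) (p₀.1 1) - ff (p₀.1 0) = 0 := by
        have h := ff_eq_gg (E_absq p₀.2) (E_absd p₀.2) (E_absqd p₀.2)
          (by linarith : mu (p₀.1 0) (p₀.1 1) = 1)
        linarith
      have hval : p₀.1 2 * ((gg (p₀.1 0) (p₀.1 1) - ff (p₀.1 0)) /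
          (1 - mu (p₀.1 0) (p₀.1 1))) = 0 := by
        rw [hσ, div_zero, mul_zero]
      have htend : Filter.Tendsto (fun p : ↥E => gg (p.1 0) (p.1 1) - ff (p.1 0))
          (nhds p₀) (nhds 0) := by
        have h := (continuous_ggc.sub continuous_ffc).tendsto p₀
        simp only [Pi.sub_def] at h; rw [hρ] at h
        exact h
      have hb : ∀ p : ↥E, ‖p.1 2 * ((gg (p.1 0) (p.1 1) - ff (p.1 0)) /
          (1 - mu (p.1 0) (p.1 1)))‖ ≤ gg (p.1 0) (p.1 1) - ff (p.1 0) := fun p => by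
        rw [Real.norm_eq_abs]; exact bound_ps3 p.2
      have hsq := squeeze_zero_norm hb htend
      unfold ContinuousAt
      have h0 : (fun p : ↥E => p.1 2 * ((gg (p.1 0) (p.1 1) - ff (p.1 0)) /
          (1 - mu (p.1 0) (p.1 1)))) p₀ = 0 := hval
      rw [h0]
      exact hsq
    · exact (contc 2).continuousAt.mul (ContinuousAt.div
        (continuous_ggc.sub continuous_ffc).continuousAt
        (continuous_const.sub continuous_muc).continuousAt hσ)
  show Continuous fun p : ↥E => (p.1 2 * ((gg (p.1 0) (p.1 1) - ff (p.1 0)) /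
      (1 - mu (p.1 0) (p.1 1))) + ff (p.1 0) + gg (p.1 0) (p.1 1)) / 2
  exact ((hmain.add continuous_ffc).add continuous_ggc).div_const 2

/-- the homeomorphism from the solid form to the double cone -/
def homeoSE : ↥S ≃ₜ ↥E where
  toFun p := ⟨toE p.1, toE_mem p.2⟩
  invFun p := ⟨fromE p.1, fromE_mem p.2⟩
  left_inv p := Subtype.ext (fromE_toE p.2)
  right_inv p := Subtype.ext (toE_fromE p.2)
  continuous_toFun := by
    apply Continuous.subtype_mk
    apply continuous_pi
    intro i
    fin_cases i
    · exact contc 0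
    · exact contc 1
    · exact continuous_th3_S
  continuous_invFun := by
    apply Continuous.subtype_mk
    apply continuous_pi
    intro i
    fin_cases i
    · exact contc 0
    · exact contc 1
    · exact continuous_ps3_E

end TnnBall

namespace TnnBall

/-- the double cone over the hexagon, in Euclidean space -/
def E' : Set (EuclideanSpace ℝ (Fin 3)) := {p | mu (p 0) (p 1) + |p 2| ≤ 1}

lemma mu_combo {a b q1 d1 q2 d2 : ℝ} (ha : 0 ≤ a) (hb : 0 ≤ b) :
    mu (a * q1 + b * q2) (a * d1 + b * d2) ≤ a * mu q1 d1 + b * mu q2 d2 := by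
  have habs : ∀ u v : ℝ, |a * u + b * v| ≤ a * |u| + b * |v| := by
    intro u v
    calc |a * u + b * v| ≤ |a * u| + |b * v| := abs_add_le _ _
      _ = a * |u| + b * |v| := by rw [abs_mul, abs_mul, abs_of_nonneg ha, abs_of_nonneg hb]
  have hq1 : |q1| ≤ mu q1 d1 := le_trans (le_max_left _ _) (le_max_left _ _)
  have hd1 : |d1| ≤ mu q1 d1 := le_trans (le_max_right _ _) (le_max_left _ _)
  have hqd1 : |q1 + d1| ≤ mu q1 d1 := le_max_right _ _
  have hq2 : |q2| ≤ mu q2 d2 := le_trans (le_max_left _ _) (le_max_left _ _)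
  have hd2 : |d2| ≤ mu q2 d2 := le_trans (le_max_right _ _) (le_max_left _ _)
  have hqd2 : |q2 + d2| ≤ mu q2 d2 := le_max_right _ _
  refine max_le (max_le ?_ ?_) ?_
  · calc |a * q1 + b * q2| ≤ a * |q1| + b * |q2| := habs _ _
      _ ≤ a * mu q1 d1 + b * mu q2 d2 :=
        add_le_add (mul_le_mul_of_nonneg_left hq1 ha) (mul_le_mul_of_nonneg_left hq2 hb)
  · calc |a * d1 + b * d2| ≤ a * |d1| + b * |d2| := habs _ _
      _ ≤ a * mu q1 d1 + b * mu q2 d2 :=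
        add_le_add (mul_le_mul_of_nonneg_left hd1 ha) (mul_le_mul_of_nonneg_left hd2 hb)
  · have : a * q1 + b * q2 + (a * d1 + b * d2) = a * (q1 + d1) + b * (q2 + d2) := by ring
    rw [this]
    calc |a * (q1 + d1) + b * (q2 + d2)| ≤ a * |q1 + d1| + b * |q2 + d2| := habs _ _
      _ ≤ a * mu q1 d1 + b * mu q2 d2 :=
        add_le_add (mul_le_mul_of_nonneg_left hqd1 ha) (mul_le_mul_of_nonneg_left hqd2 hb)

lemma convex_E' : Convex ℝ E' := by
  intro x hx y hy a b ha hb hab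
  have hx' : mu (x 0) (x 1) + |x 2| ≤ 1 := hx
  have hy' : mu (y 0) (y 1) + |y 2| ≤ 1 := hy
  show mu ((a • x + b • y) 0) ((a • x + b • y) 1) + |(a • x + b • y) 2| ≤ 1
  have happ : ∀ i : Fin 3, (a • x + b • y) i = a * x i + b * y i := by
    intro i
    simp [PiLp.add_apply, PiLp.smul_apply, smul_eq_mul]
  rw [happ 0, happ 1, happ 2]
  have h1 := mu_combo (q1 := x 0) (d1 := x 1) (q2 := y 0) (d2 := y 1) ha hb
  have h2 : |a * x 2 + b * y 2| ≤ a * |x 2| + b * |y 2| := by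
    calc |a * x 2 + b * y 2| ≤ |a * x 2| + |b * y 2| := abs_add_le _ _
      _ = a * |x 2| + b * |y 2| := by rw [abs_mul, abs_mul, abs_of_nonneg ha, abs_of_nonneg hb]
  nlinarith [mul_le_mul_of_nonneg_left hx' ha, mul_le_mul_of_nonneg_left hy' hb]

lemma continuous_En : Continuous fun p : EuclideanSpace ℝ (Fin 3) => mu (p 0) (p 1) + |p 2| := by
  apply Continuous.add
  · exact continuous_mu.comp (((EuclideanSpace.proj (0 : Fin 3)).continuous).prodMk
      ((EuclideanSpace.proj (1 : Fin 3)).continuous))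
  · exact (EuclideanSpace.proj (2 : Fin 3)).continuous.abs

lemma closed_E' : IsClosed E' := isClosed_le continuous_En continuous_const

set_option maxHeartbeats 1000000 in
lemma coord_le_norm (y : EuclideanSpace ℝ (Fin 3)) (i : Fin 3) : |y i| ≤ ‖y‖ := by
  rw [EuclideanSpace.norm_eq]
  have h : |y i| ^ 2 ≤ ∑ j, ‖y j‖ ^ 2 := by
    have h2 := Finset.single_le_sum (f := fun j => ‖y j‖ ^ 2)
      (fun j _ => sq_nonneg _) (Finset.mem_univ i)
    simpa [Real.norm_eq_abs] using h2
  calc |y i| = Real.sqrt (|y i| ^ 2) := by rw [Real.sqrt_sq (abs_nonneg _)]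
    _ ≤ _ := Real.sqrt_le_sqrt (by simpa [sq_abs] using h)

lemma interior_E' : (0 : EuclideanSpace ℝ (Fin 3)) ∈ interior E' := by
  rw [mem_interior]
  refine ⟨ball 0 (1/4), ?_, isOpen_ball, mem_ball_self (by norm_num)⟩
  intro y hy
  rw [mem_ball_zero_iff] at hy
  have h0 := (coord_le_norm y 0)
  have h1 := (coord_le_norm y 1)
  have h2 := (coord_le_norm y 2)
  have hmu : mu (y 0) (y 1) ≤ |y 0| + |y 1| := by
    refine max_le (max_le ?_ ?_) ?_
    · linarith [abs_nonneg (y 1)]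
    · linarith [abs_nonneg (y 0)]
    · exact abs_add_le _ _
  show mu (y 0) (y 1) + |y 2| ≤ 1
  linarith

lemma bounded_E' : Bornology.IsBounded E' := by
  apply (Metric.isBounded_closedBall (x := (0 : EuclideanSpace ℝ (Fin 3))) (r := 2)).subset
  intro y hy
  have hy' : mu (y 0) (y 1) + |y 2| ≤ 1 := hy
  have hmu : mu (y 0) (y 1) ≤ 1 := by linarith [abs_nonneg (y 2)]
  have h0 : |y 0| ≤ 1 := le_trans (le_trans (le_max_left _ _) (le_max_left _ _)) hmu
  have h1 : |y 1| ≤ 1 := le_trans (le_trans (le_max_right _ _) (le_max_left _ _)) hmu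
  have h2 : |y 2| ≤ 1 := by linarith [(le_trans (le_trans (le_max_left _ _) (le_max_left _ _)) hmu : |y 0| ≤ 1), mu_nonneg' (y 0) (y 1)]
  rw [mem_closedBall_zero_iff, EuclideanSpace.norm_eq]
  have hsum : ∑ j, ‖y j‖ ^ 2 ≤ 4 := by
    rw [Fin.sum_univ_three]
    simp only [Real.norm_eq_abs]
    nlinarith [abs_nonneg (y 0), abs_nonneg (y 1), abs_nonneg (y 2)]
  calc Real.sqrt (∑ j, ‖y j‖ ^ 2) ≤ Real.sqrt 4 := Real.sqrt_le_sqrt hsum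
    _ = 2 := by rw [show (4 : ℝ) = 2 ^ 2 by norm_num, Real.sqrt_sq (by norm_num)]

end TnnBall

namespace TnnBall

def Heq6 : EuclideanSpace ℝ (Fin 6) ≃ₜ (Fin 6 → ℝ) :=
  (PiLp.continuousLinearEquiv 2 ℝ (fun _ : Fin 6 => ℝ)).toHomeomorph

def Heq3 : (Fin 3 → ℝ) ≃ₜ EuclideanSpace ℝ (Fin 3) :=
  (PiLp.continuousLinearEquiv 2 ℝ (fun _ : Fin 3 => ℝ)).symm.toHomeomorph

lemma Heq6_image : Heq6 '' tnnFlag = T := by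
  ext x
  constructor
  · rintro ⟨y, hy, rfl⟩
    exact hy
  · intro hx
    exact ⟨Heq6.symm x, hx, Heq6.apply_symm_apply x⟩

lemma Heq3_image : Heq3 '' E = E' := by
  ext x
  constructor
  · rintro ⟨y, hy, rfl⟩
    exact hy
  · intro hx
    exact ⟨Heq3.symm x, hx, Heq3.apply_symm_apply x⟩

end TnnBall

/-- The totally nonnegative part of the complete flag variety of `SL₃(ℝ)` is homeomorphic
to a closed 3-dimensional ball. -/
theorem tnnFlag_homeomorphic_closedBall :
    Nonempty (tnnFlag ≃ₜ Metric.closedBall (0 : EuclideanSpace ℝ (Fin 3)) 1) := by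
  obtain ⟨h, _, hcl, _⟩ := exists_homeomorph_image_interior_closure_frontier_eq_unitBall
    TnnBall.convex_E' ⟨0, TnnBall.interior_E'⟩ TnnBall.bounded_E'
  rw [TnnBall.closed_E'.closure_eq] at hcl
  exact ⟨(((((((TnnBall.Heq6.image tnnFlag).trans
    (Homeomorph.setCongr TnnBall.Heq6_image)).trans TnnBall.homeoTS).trans
    TnnBall.homeoSE).trans (TnnBall.Heq3.image TnnBall.E)).trans
    (Homeomorph.setCongr TnnBall.Heq3_image)).trans (h.image TnnBall.E')).trans
    (Homeomorph.setCongr hcl)⟩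

end
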